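/- In the configuration model with degree sequence d and M = \sum_i d_i even: for any simple graph H on {1,...,n} with d_i^H \le d_i for all i, the probability that H is a subgraph of the resulting multigraph G* is at most \prod_{i=1}^n (d_i)_{d_i^H} \cdot \prod_{i=1}^{e(H)} 1/(M - 2i + 1). -/

import Mathlib

open Finset

/-- number of perfect matchings on a `k`-point set -/
def mcount : ℕ → ℕ
  | 0 => 1
  | 1 => 0
  | (k+2) => (k+1) * mcount k

/-- fixed-point-free involutions as bare functions -/
abbrev MatchingFun (α : Type) : Type := {f : α → α // (∀ x, f (f x) = x) ∧ ∀ x, f x ≠ x}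

/-- Lemma B : matchings agreeing with `g` on a closed set `P` correspond to matchings of `Pᶜ`. -/
noncomputable def matchingExtEquiv {α : Type} (g : α → α) (P : Set α)
    (hcl : ∀ x ∈ P, g x ∈ P) (hinv : ∀ x ∈ P, g (g x) = x) (hfpf : ∀ x ∈ P, g x ≠ x) :
    {f : MatchingFun α // ∀ x ∈ P, f.1 x = g x} ≃ MatchingFun ↥(Pᶜ) := by
  classical
  have key : ∀ (f : MatchingFun α), (∀ x ∈ P, f.1 x = g x) → ∀ x : α, x ∉ P → f.1 x ∉ P := by
    intro f hf x hx hmem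
    have h1 : f.1 (f.1 x) = g (f.1 x) := hf _ hmem
    have h2 : f.1 (f.1 x) = x := f.2.1 x
    exact hx (h2 ▸ h1 ▸ hcl _ hmem)
  refine
  { toFun := fun f => ⟨fun x => ⟨f.1.1 x.1, key f.1 f.2 x.1 x.2⟩, ?_, ?_⟩
    invFun := fun h => ⟨⟨fun x => if hx : x ∈ P then g x else (h.1 ⟨x, hx⟩).1, ?_, ?_⟩, ?_⟩
    left_inv := ?_
    right_inv := ?_ }
  · intro x; exact Subtype.ext (f.1.2.1 x.1)
  · intro x hx; exact f.1.2.2 x.1 (congrArg Subtype.val hx)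
  · intro x
    by_cases hx : x ∈ P
    · simp only [dif_pos hx, dif_pos (hcl x hx)]; exact hinv x hx
    · simp only [dif_neg hx, dif_neg (h.1 ⟨x, hx⟩).2]
      exact congrArg Subtype.val (h.2.1 ⟨x, hx⟩)
  · intro x
    by_cases hx : x ∈ P
    · simp only [dif_pos hx]; exact hfpf x hx
    · simp only [dif_neg hx]
      intro he
      exact h.2.2 ⟨x, hx⟩ (Subtype.ext he)
  · intro x hx; exact dif_pos hx
  · intro f
    apply Subtype.ext; apply Subtype.ext; funext x
    by_cases hx : x ∈ P
    · exact (dif_pos hx).trans (f.2 x hx).symm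
    · exact dif_neg hx
  · intro h
    apply Subtype.ext; funext x
    apply Subtype.ext
    exact dif_neg x.2

lemma natCard_matchingFun : ∀ (k : ℕ) (α : Type) [Fintype α], Fintype.card α = k →
    Nat.card (MatchingFun α) = mcount k := by
  intro k
  induction k using Nat.strong_induction_on with
  | _ k ih =>
    intro α _ hk
    classical
    match k, ih, hk with
    | 0, ih, hk =>
      have : IsEmpty α := Fintype.card_eq_zero_iff.mp hk
      rw [show mcount 0 = 1 from rfl, Nat.card_eq_one_iff_unique]
      refine ⟨⟨fun f g => ?_⟩, ⟨⟨id, fun x => isEmptyElim x, fun x => isEmptyElim x⟩⟩⟩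
      apply Subtype.ext; funext x; exact isEmptyElim x
    | 1, ih, hk =>
      obtain ⟨p, hp⟩ := Fintype.card_eq_one_iff.mp hk
      have : IsEmpty (MatchingFun α) := by
        refine ⟨fun f => f.2.2 p ?_⟩
        exact hp _
      simp [Nat.card_of_isEmpty, mcount]
    | (j+2), ih, hk =>
      have hpos : 0 < Fintype.card α := by omega
      obtain ⟨p⟩ := Fintype.card_pos_iff.mp hpos
      -- the equiv
      have E : MatchingFun α ≃ Σ q : {q : α // q ≠ p}, MatchingFun ↥(({p, q.1} : Set α)ᶜ) := by
        refine (Equiv.sigmaFiberEquiv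
          (fun f : MatchingFun α => (⟨f.1 p, f.2.2 p⟩ : {q : α // q ≠ p}))).symm.trans
          (Equiv.sigmaCongrRight fun q => ?_)
        have hqp : q.1 ≠ p := q.2
        refine (Equiv.subtypeEquivRight (fun f => ?_)).trans
          (matchingExtEquiv (fun x => if x = p then q.1 else if x = q.1 then p else x)
            ({p, q.1} : Set α) ?_ ?_ ?_)
        · constructor
          · intro hf x hx
            rcases hx with hx | hx
            · subst hx
              simp only [if_pos rfl]
              exact congrArg Subtype.val hf
            · simp only [Set.mem_singleton_iff] at hx
              subst hx
              have h1 : f.1 p = q.1 := congrArg Subtype.val hf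
              rw [if_neg hqp, if_pos rfl, ← h1, f.2.1 p]
          · intro hf
            apply Subtype.ext
            have := hf p (Or.inl rfl)
            simpa using this
        · intro x hx
          rcases hx with hx | hx
          · subst hx; simp [hqp.symm]
          · simp only [Set.mem_singleton_iff] at hx; subst hx
            simp [hqp]
        · intro x hx
          rcases hx with hx | hx
          · subst hx; simp [hqp]
          · simp only [Set.mem_singleton_iff] at hx; subst hx
            simp [hqp, hqp.symm]
        · intro x hx
          rcases hx with hx | hx
          · subst hx; simp [hqp, hqp.symm]
          · simp only [Set.mem_singleton_iff] at hx; subst hx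
            simp [hqp, hqp.symm]
      rw [Nat.card_congr E]
      have hcompl : ∀ q : {q : α // q ≠ p}, Fintype.card ↥(({p, q.1} : Set α)ᶜ) = j := by
        intro q
        rw [Fintype.card_compl_set]
        have : Fintype.card ↥({p, q.1} : Set α) = 2 := by
          rw [← Nat.card_eq_fintype_card, Nat.card_coe_set_eq, Set.ncard_pair (Ne.symm q.2)]
        omega
      rw [Nat.card_eq_fintype_card, Fintype.card_sigma]
      have : ∀ q : {q : α // q ≠ p}, Fintype.card (MatchingFun ↥(({p, q.1} : Set α)ᶜ)) = mcount j := by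
        intro q
        rw [← Nat.card_eq_fintype_card]
        exact ih j (by omega) _ (hcompl q)
      rw [Finset.sum_congr rfl (fun q _ => this q), Finset.sum_const, smul_eq_mul]
      have hcard : Fintype.card {q : α // q ≠ p} = j + 1 := by
        rw [Fintype.card_subtype_compl, Fintype.card_subtype_eq, hk]
        omega
      simp [hcard, mcount]

lemma mcount_rec (j : ℕ) : mcount (j + 2) = (j + 1) * mcount j := rfl

lemma mcount_mul_prod (M : ℕ) : ∀ e : ℕ, 2 * e ≤ M →
    mcount (M - 2 * e) * ∏ i ∈ Finset.range e, (M - (2 * i + 1)) = mcount M := by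
  intro e
  induction e with
  | zero => simp
  | succ e ihe =>
    intro h
    have h2 : 2 * e ≤ M := by omega
    rw [Finset.prod_range_succ, ← mul_assoc, mul_comm (mcount (M - 2 * (e+1)))
      (∏ i ∈ Finset.range e, (M - (2 * i + 1))), mul_assoc]
    have key : mcount (M - 2 * (e+1)) * (M - (2 * e + 1)) = mcount (M - 2 * e) := by
      have hM : M - 2 * e = (M - 2 * (e + 1)) + 2 := by omega
      have hM1 : M - (2 * e + 1) = (M - 2 * (e + 1)) + 1 := by omega
      rw [hM, mcount_rec, hM1, mul_comm]
    rw [key, mul_comm]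
    exact ihe h2

/-- re-association from the `Perm` subtype to the bare-function subtype -/
def permSubtypeEquiv {α : Type} (C : (α → α) → Prop)
    (hC : ∀ f : α → α, C f → Function.Involutive f) :
    {f : Equiv.Perm α // C ⇑f} ≃ {g : α → α // C g} where
  toFun f := ⟨⇑f.1, f.2⟩
  invFun g := ⟨(hC g.1 g.2).toPerm, g.2⟩
  left_inv f := Subtype.ext (Equiv.ext fun _ => rfl)
  right_inv g := rfl

abbrev CMV (n : ℕ) (d : Fin n → ℕ) : Type := (i : Fin n) × Fin (d i)

def sndCast {n : ℕ} {d : Fin n → ℕ} (x : CMV n d) (u : Fin n) (h : x.1 = u) : Fin (d u) :=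
  h ▸ x.2

lemma sndCast_spec {n : ℕ} {d : Fin n → ℕ} (x : CMV n d) (u : Fin n) (h : x.1 = u) :
    (⟨u, sndCast x u h⟩ : CMV n d) = x := by
  subst h; rfl

variable {n : ℕ} (d : Fin n → ℕ) (H : SimpleGraph (Fin n))

abbrev Assignment : Type := ∀ u : Fin n, (↥(H.neighborSet u) ↪ Fin (d u))

def Realizes (A : Assignment d H) (f : MatchingFun (CMV n d)) : Prop :=
  ∀ (u v : Fin n) (h : H.Adj u v), f.1 ⟨u, A u ⟨v, h⟩⟩ = ⟨v, A v ⟨u, h.symm⟩⟩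

lemma exists_assignment (f : MatchingFun (CMV n d))
    (hf : ∀ u v, H.Adj u v → ∃ p : CMV n d, p.1 = u ∧ (f.1 p).1 = v) :
    ∃ A : Assignment d H, Realizes d H A f := by
  classical
  have hex : ∀ u v, H.Adj u v → ∃ q : Fin (d u), (f.1 ⟨u, q⟩).1 = v := by
    intro u v h
    obtain ⟨⟨w, q⟩, hp1, hp2⟩ := hf u v h
    dsimp at hp1; subst hp1
    exact ⟨q, hp2⟩
  choose c hc using hex
  set B : ∀ u : Fin n, ↥(H.neighborSet u) → Fin (d u) := fun u w =>
    if hlt : u < w.1 then c u w.1 w.2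
    else sndCast (f.1 ⟨w.1, c w.1 u (H.adj_symm w.2)⟩) u (hc w.1 u (H.adj_symm w.2)) with hB
  have hB1 : ∀ (u : Fin n) (w : ↥(H.neighborSet u)), (f.1 ⟨u, B u w⟩).1 = w.1 := by
    intro u w
    by_cases hlt : u < w.1
    · simp only [hB, dif_pos hlt]
      exact hc u w.1 w.2
    · simp only [hB, dif_neg hlt]
      rw [sndCast_spec, f.2.1]
  have hinj : ∀ u : Fin n, Function.Injective (B u) := by
    intro u x y hxy
    apply Subtype.ext
    have h1 := hB1 u x
    have h2 := hB1 u y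
    rw [hxy, h2] at h1
    exact h1.symm
  refine ⟨fun u => ⟨B u, hinj u⟩, ?_⟩
  intro u v h
  simp only [Function.Embedding.coeFn_mk]
  by_cases hlt : u < v
  · have hgt : ¬ v < u := asymm hlt
    simp only [hB, dif_pos hlt, dif_neg hgt]
    exact (sndCast_spec _ _ _).symm
  · have hgt : v < u := lt_of_le_of_ne (not_lt.mp hlt) h.ne'
    have hlt' : ¬ u < v := hlt
    simp only [hB, dif_neg hlt', dif_pos hgt]
    rw [sndCast_spec, f.2.1]

def APts (A : Assignment d H) : Set (CMV n d) :=
  {x | ∃ (u v : Fin n) (h : H.Adj u v), x = ⟨u, A u ⟨v, h⟩⟩}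

lemma realizes_iff_agree (A : Assignment d H) (f₀ : MatchingFun (CMV n d))
    (h₀ : Realizes d H A f₀) (f : MatchingFun (CMV n d)) :
    Realizes d H A f ↔ ∀ x ∈ APts d H A, f.1 x = f₀.1 x := by
  constructor
  · rintro hf x ⟨u, v, h, rfl⟩
    rw [hf u v h, h₀ u v h]
  · intro hag u v h
    rw [hag _ ⟨u, v, h, rfl⟩, h₀ u v h]

noncomputable def pset_equiv (A : Assignment d H) :
    (Σ u : Fin n, ↥(H.neighborSet u)) ≃ ↥(APts d H A) := by
  classical
  have hinj : Function.Injective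
      (fun p : Σ u : Fin n, ↥(H.neighborSet u) => (⟨p.1, A p.1 p.2⟩ : CMV n d)) := by
    rintro ⟨u, v⟩ ⟨u', v'⟩ hp
    obtain ⟨h1, h2⟩ := Sigma.mk.inj_iff.mp hp
    subst h1
    have : A u v = A u v' := eq_of_heq h2
    rw [(A u).injective this]
  refine (Equiv.ofInjective _ hinj).trans (Equiv.setCongr ?_)
  ext x
  constructor
  · rintro ⟨⟨u, v⟩, rfl⟩
    exact ⟨u, v.1, v.2, rfl⟩
  · rintro ⟨u, v, h, rfl⟩
    exact ⟨⟨u, ⟨v, h⟩⟩, rfl⟩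

lemma card_pset (A : Assignment d H) :
    Nat.card ↥(APts d H A) = 2 * Nat.card H.edgeSet := by
  classical
  rw [← Nat.card_congr (pset_equiv d H A), Nat.card_eq_fintype_card, Fintype.card_sigma]
  have : ∀ u, Fintype.card ↥(H.neighborSet u) = H.degree u := by
    intro u
    rw [SimpleGraph.degree, ← Set.toFinset_card]
    rfl
  rw [Finset.sum_congr rfl fun u _ => this u, SimpleGraph.sum_degrees_eq_twice_card_edges,
    SimpleGraph.edgeFinset_card, Nat.card_eq_fintype_card]

lemma card_ext_mul_prod (A : Assignment d H) :
    Nat.card {f : MatchingFun (CMV n d) // Realizes d H A f} *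
      ∏ i ∈ Finset.range (Nat.card H.edgeSet), ((∑ j, d j) - (2 * i + 1)) ≤
    mcount (∑ j, d j) := by
  classical
  set M := ∑ j, d j with hM
  have hcardV : Fintype.card (CMV n d) = M := by
    rw [Fintype.card_sigma, hM]
    simp
  rcases isEmpty_or_nonempty {f : MatchingFun (CMV n d) // Realizes d H A f} with he | ⟨⟨f₀, h₀⟩⟩
  · rw [Nat.card_of_isEmpty, Nat.zero_mul]
    exact Nat.zero_le _
  · set e := Nat.card H.edgeSet with hee
    have hP : Nat.card ↥(APts d H A) = 2 * e := card_pset d H A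
    have hPfin : Fintype.card ↥(APts d H A) = 2 * e := by
      rw [← Nat.card_eq_fintype_card, hP]
    have h2e : 2 * e ≤ M := by
      have := Fintype.card_le_of_injective _ (Subtype.val_injective
        (p := fun x => x ∈ APts d H A))
      rw [hPfin, hcardV] at this
      exact this
    have hcl : ∀ x ∈ APts d H A, f₀.1 x ∈ APts d H A := by
      rintro x ⟨u, v, h, rfl⟩
      rw [h₀ u v h]
      exact ⟨v, u, h.symm, rfl⟩
    have E := (Equiv.subtypeEquivRight (fun f => realizes_iff_agree d H A f₀ h₀ f)).trans
      (matchingExtEquiv f₀.1 (APts d H A) hcl (fun x _ => f₀.2.1 x) (fun x _ => f₀.2.2 x))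
    rw [Nat.card_congr E]
    have hcompl : Fintype.card ↥((APts d H A)ᶜ) = M - 2 * e := by
      rw [Fintype.card_compl_set, hcardV, hPfin]
    rw [natCard_matchingFun _ _ hcompl]
    exact le_of_eq (mcount_mul_prod M e h2e)


/-- Configuration model: vertex `i` is a bin `Fin (d i)` of points, and a uniformly random
perfect matching (fixed-point-free involution) is taken over all `M = ∑ d i` points; the
multigraph `G*` has an edge `uv` for each matched pair with one point in bin `u` and one in
bin `v`.  For a simple graph `H` with `deg_H i ≤ d i`, the probability that `H ⊆ G*` is at
most `∏ i (d i)_{deg_H i} ⬝ ∏_{i=1}^{e(H)} 1/(M - 2i + 1)`.  Stated multiplicatively. -/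
theorem stmt4 (n : ℕ) (d : Fin n → ℕ) (hM : Even (∑ i, d i)) (H : SimpleGraph (Fin n))
    (hle : ∀ i, Nat.card (H.neighborSet i) ≤ d i) :
    Nat.card {f : Equiv.Perm ((i : Fin n) × Fin (d i)) //
        ((∀ x, f (f x) = x) ∧ ∀ x, f x ≠ x) ∧
        ∀ u v, H.Adj u v → ∃ p : (i : Fin n) × Fin (d i), p.1 = u ∧ (f p).1 = v} *
      ∏ i ∈ Finset.range (Nat.card H.edgeSet), ((∑ j, d j) - (2 * i + 1)) ≤
    (∏ i, (d i).descFactorial (Nat.card (H.neighborSet i))) *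
      Nat.card {f : Equiv.Perm ((i : Fin n) × Fin (d i)) //
        (∀ x, f (f x) = x) ∧ ∀ x, f x ≠ x} := by
  classical
  have hcardV : Fintype.card (CMV n d) = ∑ j, d j := by
    rw [Fintype.card_sigma]; simp
  -- rewrite the RHS matching count
  have eR : Nat.card {f : Equiv.Perm ((i : Fin n) × Fin (d i)) //
      (∀ x, f (f x) = x) ∧ ∀ x, f x ≠ x} = mcount (∑ j, d j) := by
    rw [Nat.card_congr (permSubtypeEquiv
      (fun g : CMV n d → CMV n d => (∀ x, g (g x) = x) ∧ ∀ x, g x ≠ x) (fun g hg => hg.1))]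
    exact natCard_matchingFun _ _ hcardV
  -- rewrite the LHS count to the bare-function version
  have eL : Nat.card {f : Equiv.Perm ((i : Fin n) × Fin (d i)) //
        ((∀ x, f (f x) = x) ∧ ∀ x, f x ≠ x) ∧
        ∀ u v, H.Adj u v → ∃ p : (i : Fin n) × Fin (d i), p.1 = u ∧ (f p).1 = v} =
      Nat.card {f : MatchingFun (CMV n d) //
        ∀ u v, H.Adj u v → ∃ p : CMV n d, p.1 = u ∧ (f.1 p).1 = v} := by
    refine Nat.card_congr ((permSubtypeEquiv
      (fun g : CMV n d → CMV n d => ((∀ x, g (g x) = x) ∧ ∀ x, g x ≠ x) ∧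
        ∀ u v, H.Adj u v → ∃ p : CMV n d, p.1 = u ∧ (g p).1 = v)
      (fun g hg => hg.1.1)).trans (Equiv.subtypeSubtypeEquivSubtypeInter _ _).symm)
  rw [eL, eR]
  -- the injection into assigned matchings
  set K := {f : MatchingFun (CMV n d) //
      ∀ u v, H.Adj u v → ∃ p : CMV n d, p.1 = u ∧ (f.1 p).1 = v} with hK
  set S := (Σ A : Assignment d H, {f : MatchingFun (CMV n d) // Realizes d H A f}) with hS
  have hinj : Nat.card K ≤ Nat.card S := by
    have Φinj : Function.Injective (fun f : K =>
        (⟨(exists_assignment d H f.1 f.2).choose, f.1,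
          (exists_assignment d H f.1 f.2).choose_spec⟩ : S)) := by
      intro f g hfg
      exact Subtype.ext (congrArg (fun s : S => s.2.1) hfg)
    exact Nat.card_le_card_of_injective _ Φinj
  have hsum : Nat.card S = ∑ A : Assignment d H,
      Nat.card {f : MatchingFun (CMV n d) // Realizes d H A f} := by
    rw [Nat.card_eq_fintype_card, Fintype.card_sigma]
    exact Finset.sum_congr rfl fun A _ => (Nat.card_eq_fintype_card).symm
  have hassign : Nat.card (Assignment d H) =
      ∏ i, (d i).descFactorial (Nat.card (H.neighborSet i)) := by
    rw [show Assignment d H = ∀ u : Fin n, (↥(H.neighborSet u) ↪ Fin (d u)) from rfl,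
      Nat.card_pi]
    refine Finset.prod_congr rfl fun u _ => ?_
    rw [Nat.card_eq_fintype_card, Fintype.card_embedding_eq, Fintype.card_fin,
      Nat.card_eq_fintype_card]
  calc Nat.card K * ∏ i ∈ Finset.range (Nat.card H.edgeSet), ((∑ j, d j) - (2 * i + 1))
      ≤ Nat.card S * ∏ i ∈ Finset.range (Nat.card H.edgeSet), ((∑ j, d j) - (2 * i + 1)) :=
        Nat.mul_le_mul_right _ hinj
    _ = ∑ A : Assignment d H, (Nat.card {f : MatchingFun (CMV n d) // Realizes d H A f} *
          ∏ i ∈ Finset.range (Nat.card H.edgeSet), ((∑ j, d j) - (2 * i + 1))) := by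
        rw [hsum, Finset.sum_mul]
    _ ≤ ∑ _A : Assignment d H, mcount (∑ j, d j) :=
        Finset.sum_le_sum fun A _ => card_ext_mul_prod d H A
    _ = Nat.card (Assignment d H) * mcount (∑ j, d j) := by
        rw [Finset.sum_const, Finset.card_univ, smul_eq_mul, Nat.card_eq_fintype_card]
    _ = (∏ i, (d i).descFactorial (Nat.card (H.neighborSet i))) * mcount (∑ j, d j) := by
        rw [hassign]
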